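/- Along solutions of ẋ₁ = -x₁ + wφ(x₂), ẋ₂ = -x₂ + wφ(x₁), ẇ = -w + cφ(x₁)φ(x₂) with c > -16, confined to the region where |w| ≤ |c| and (when c < 0) x₁, x₂ ≤ 0, the function V(x₁,x₂,w) = (x₁-x₂)²/2 satisfies dV/dt = -(x₁-x₂)²·(1 + w·(φ(x₁)-φ(x₂))/(x₁-x₂)) ≤ 0, with equality if and only if x₁ = x₂. -/

import Mathlib

noncomputable def phi (z : ℝ) : ℝ := 1 / (1 + Real.exp (-z))

lemma phi_hasDerivAt (z : ℝ) :
    HasDerivAt phi (Real.exp (-z) / (1 + Real.exp (-z)) ^ 2) z := by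
  have hpos : 0 < 1 + Real.exp (-z) := by positivity
  have h1 : HasDerivAt (fun y : ℝ => 1 + Real.exp (-y)) (-Real.exp (-z)) z := by
    have := (Real.hasDerivAt_exp (-z)).comp z (hasDerivAt_neg z)
    simpa using (this.const_add 1)
  have h2 := h1.inv (ne_of_gt hpos)
  have : HasDerivAt (fun y : ℝ => (1 + Real.exp (-y))⁻¹)
      (Real.exp (-z) / (1 + Real.exp (-z)) ^ 2) z := by
    exact h2.congr_deriv (by ring)
  convert this using 2 with y
  simp [phi, one_div]

lemma phi_mono : StrictMono phi :=
  strictMono_of_deriv_pos (fun z => by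
    rw [(phi_hasDerivAt z).deriv]
    positivity)

lemma lyap_arith (c wv u d : ℝ) (hc : -16 < c) (hw0 : wv < 0) (hwlb : c/4 ≤ wv)
    (hu2 : 0 < u ^ 2) (hle : u * d ≤ u ^ 2 / 4) :
    -u ^ 2 - wv * u * d < 0 := by
  nlinarith [mul_le_mul_of_nonpos_left hle hw0.le,
    mul_le_mul_of_nonneg_right hwlb (show (0:ℝ) ≤ u ^ 2 / 4 by positivity)]

lemma phi_lip (a b : ℝ) : |phi a - phi b| ≤ |a - b| / 4 := by
  have hmono : Monotone (fun z : ℝ => z / 4 - phi z) := by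
    apply monotone_of_deriv_nonneg
    · exact (differentiable_id.div_const 4).sub
        (fun z => (phi_hasDerivAt z).differentiableAt)
    · intro z
      have hd : HasDerivAt (fun z : ℝ => z / 4 - phi z)
          (1 / 4 - Real.exp (-z) / (1 + Real.exp (-z)) ^ 2) z :=
        ((hasDerivAt_id z).div_const 4).sub (phi_hasDerivAt z)
      rw [hd.deriv]
      have he : 0 < Real.exp (-z) := Real.exp_pos _
      rw [sub_nonneg, div_le_div_iff₀ (by positivity) (by norm_num)]
      nlinarith [sq_nonneg (1 - Real.exp (-z))]
  rcases le_total a b with h | h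
  · have h1 := hmono h
    have h2 : phi a ≤ phi b := phi_mono.monotone h
    simp only at h1
    rw [abs_of_nonpos (by linarith), abs_of_nonpos (by linarith)]
    linarith
  · have h1 := hmono h
    have h2 : phi b ≤ phi a := phi_mono.monotone h
    simp only at h1
    rw [abs_of_nonneg (by linarith), abs_of_nonneg (by linarith)]
    linarith

/-- Along solutions of the reduced symmetric system with c > -16, confined to the
region where |w| ≤ |c| (with w ≥ c/4 and x₁, x₂ ≤ 0 when c < 0, and w ≥ 0 when
c ≥ 0), the Lyapunov function V = (x₁-x₂)²/2 has derivative
dV/dt = -(x₁-x₂)²(1 + w(φ(x₁)-φ(x₂))/(x₁-x₂)) ≤ 0, with equality iff x₁ = x₂. -/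
theorem lyapunov_decrease (c : ℝ) (hc : -16 < c) (x₁ x₂ w : ℝ → ℝ)
    (h₁ : ∀ t, HasDerivAt x₁ (-(x₁ t) + w t * phi (x₂ t)) t)
    (h₂ : ∀ t, HasDerivAt x₂ (-(x₂ t) + w t * phi (x₁ t)) t)
    (h₃ : ∀ t, HasDerivAt w (-(w t) + c * phi (x₁ t) * phi (x₂ t)) t)
    (t : ℝ) (hw : |w t| ≤ |c|)
    (hneg : c < 0 → x₁ t ≤ 0 ∧ x₂ t ≤ 0 ∧ c / 4 ≤ w t)
    (hpos : 0 ≤ c → 0 ≤ w t) :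
    ∃ D : ℝ, HasDerivAt (fun τ => (x₁ τ - x₂ τ) ^ 2 / 2) D t ∧
      (x₁ t ≠ x₂ t →
        D = -(x₁ t - x₂ t) ^ 2 *
              (1 + w t * (phi (x₁ t) - phi (x₂ t)) / (x₁ t - x₂ t))) ∧
      D ≤ 0 ∧ (D = 0 ↔ x₁ t = x₂ t) := by
  set a := x₁ t
  set b := x₂ t
  set u := a - b with hu
  set Δ := phi a - phi b with hΔ
  set D : ℝ := -(u ^ 2) - w t * u * Δ with hD
  have hderiv : HasDerivAt (fun τ => (x₁ τ - x₂ τ) ^ 2 / 2) D t := by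
    have hsub : HasDerivAt (fun τ => x₁ τ - x₂ τ)
        ((-(a) + w t * phi b) - (-(b) + w t * phi a)) t := (h₁ t).sub (h₂ t)
    have := (hsub.pow 2).div_const 2
    exact this.congr_deriv (by rw [hD]; simp only [u, Δ, a, b]; push_cast; ring)
  have huΔ : u ≠ 0 → 0 < u * Δ := by
    intro hne
    rcases lt_or_gt_of_ne hne with h | h
    · have : a < b := by simp only [hu] at h; linarith
      have := phi_mono this
      have hΔneg : Δ < 0 := by simp only [hΔ]; linarith
      have : u < 0 := h
      nlinarith
    · have : b < a := by simp only [hu] at h; linarith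
      have := phi_mono this
      have hΔpos : 0 < Δ := by simp only [hΔ]; linarith
      nlinarith
  have hkey : u ≠ 0 → D < 0 := by
    intro hne
    have hpos2 := huΔ hne
    have hu2 : 0 < u ^ 2 := by positivity
    rcases le_or_gt 0 (w t) with hw0 | hw0
    · have : 0 ≤ w t * (u * Δ) := mul_nonneg hw0 hpos2.le
      simp only [hD]; nlinarith
    · have hcneg : c < 0 := by
        by_contra hcc
        exact absurd (hpos (not_lt.mp hcc)) (not_le.mpr hw0)
      have hwlb : c / 4 ≤ w t := (hneg hcneg).2.2
      have hle : u * Δ ≤ u ^ 2 / 4 := by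
        calc u * Δ ≤ |u * Δ| := le_abs_self _
          _ = |u| * |Δ| := abs_mul _ _
          _ ≤ |u| * (|u| / 4) := by
              have := phi_lip a b
              exact mul_le_mul_of_nonneg_left (by simpa [hu, hΔ] using this) (abs_nonneg _)
          _ = u ^ 2 / 4 := by rw [mul_div_assoc']; rw [abs_mul_abs_self]; ring_nf
      exact hD ▸ lyap_arith c (w t) u Δ hc hw0 hwlb hu2 hle
  refine ⟨D, hderiv, ?_, ?_, ?_⟩
  · intro hne
    have hune : u ≠ 0 := sub_ne_zero_of_ne hne
    simp only [hD]
    field_simp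
    ring
  · rcases eq_or_ne u 0 with h | h
    · simp [hD, h]
    · exact (hkey h).le
  · constructor
    · intro hD0
      by_contra hne
      exact absurd hD0 (hkey (sub_ne_zero_of_ne hne)).ne
    · intro h
      have : u = 0 := by simp [hu, h]
      simp [hD, this]
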